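/- For every real x > 1 and every real p with 0 < p < 1, one has 4/((x^p + 1)(x^{1-p} + 1)) · L(x,1)² ≤ W_p(x,1) ≤ L(x,1)²/√x. -/

import Mathlib

open Real

/-- `2(eˢ - 1) ≤ s(eˢ + 1)` for `s ≥ 0`, i.e. `tanh(s/2) ≤ s/2`. -/
lemma aux_tanh_le (s : ℝ) (hs : 0 ≤ s) : 2 * (Real.exp s - 1) ≤ s * (Real.exp s + 1) := by
  have key : ∀ u : ℝ, 0 ≤ u → 0 ≤ 1 + (u - 1) * Real.exp u := by
    intro u _
    have h1 : 1 - u ≤ Real.exp (-u) := by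
      have := Real.add_one_le_exp (-u); linarith
    have h2 : Real.exp (-u) * Real.exp u = 1 := by rw [← Real.exp_add]; simp
    nlinarith [Real.exp_pos u]
  have hmono : MonotoneOn (fun u : ℝ => u * (Real.exp u + 1) - 2 * (Real.exp u - 1))
      (Set.Ici (0 : ℝ)) := by
    apply monotoneOn_of_deriv_nonneg (convex_Ici 0)
    · fun_prop
    · fun_prop
    · intro u hu
      rw [interior_Ici] at hu
      have hd : HasDerivAt (fun u : ℝ => u * (Real.exp u + 1) - 2 * (Real.exp u - 1))
          (1 * (Real.exp u + 1) + u * Real.exp u - 2 * Real.exp u) u := by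
        have h1 : HasDerivAt (fun u : ℝ => u * (Real.exp u + 1))
            (1 * (Real.exp u + 1) + u * Real.exp u) u :=
          (hasDerivAt_id u).mul ((Real.hasDerivAt_exp u).add_const 1)
        have h2 : HasDerivAt (fun u : ℝ => 2 * (Real.exp u - 1)) (2 * Real.exp u) u :=
          ((Real.hasDerivAt_exp u).sub_const 1).const_mul 2
        exact h1.sub h2
      rw [hd.deriv]
      have := key u (le_of_lt hu)
      nlinarith
  have h0 := hmono (Set.self_mem_Ici) (Set.mem_Ici.2 hs) hs
  simp only [zero_mul, Real.exp_zero, sub_self, mul_zero, zero_sub, neg_nonpos] at h0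
  nlinarith [h0]

/-- `s·e^{s/2} ≤ eˢ - 1` for `s ≥ 0`. -/
lemma aux_sinh_ge (s : ℝ) (hs : 0 ≤ s) : s * Real.exp (s / 2) ≤ Real.exp s - 1 := by
  have h1 : s / 2 ≤ Real.sinh (s / 2) := Real.self_le_sinh_iff.2 (by linarith)
  rw [Real.sinh_eq] at h1
  have h2 : Real.exp (s / 2) * Real.exp (s / 2) = Real.exp s := by
    rw [← Real.exp_add]; ring_nf
  have h3 : Real.exp (-(s / 2)) * Real.exp (s / 2) = 1 := by
    rw [← Real.exp_add]; simp
  nlinarith [Real.exp_pos (s / 2)]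

theorem wyd_log_mean_sq_bounds (x p : ℝ) (hx : 1 < x) (hp0 : 0 < p) (hp1 : p < 1) :
    4 / ((x ^ p + 1) * (x ^ (1 - p) + 1)) * ((x - 1) / Real.log x) ^ 2 ≤
        p * (1 - p) * (x - 1) ^ 2 / ((x ^ p - 1) * (x ^ (1 - p) - 1)) ∧
      p * (1 - p) * (x - 1) ^ 2 / ((x ^ p - 1) * (x ^ (1 - p) - 1)) ≤
        ((x - 1) / Real.log x) ^ 2 / Real.sqrt x := by
  have hx0 : (0 : ℝ) < x := by linarith
  set t := Real.log x with htdef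
  have ht : 0 < t := Real.log_pos hx
  have ha : 0 < p * t := mul_pos hp0 ht
  have hb : 0 < (1 - p) * t := mul_pos (by linarith) ht
  have EA : x ^ p = Real.exp (p * t) := by
    rw [Real.rpow_def_of_pos hx0, mul_comm]
  have EB : x ^ (1 - p) = Real.exp ((1 - p) * t) := by
    rw [Real.rpow_def_of_pos hx0, mul_comm]
  have ES : Real.sqrt x = Real.exp (p * t / 2) * Real.exp ((1 - p) * t / 2) := by
    rw [← Real.exp_add, Real.sqrt_eq_rpow, Real.rpow_def_of_pos hx0]
    ring_nf
    rfl
  set a := p * t with hadef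
  set b := (1 - p) * t with hbdef
  have hA1 : 1 < Real.exp a := Real.one_lt_exp_iff.2 ha
  have hB1 : 1 < Real.exp b := Real.one_lt_exp_iff.2 hb
  have hx1 : 0 < x - 1 := by linarith
  have hT1 := aux_tanh_le a ha.le
  have hT2 := aux_tanh_le b hb.le
  have hS1 := aux_sinh_ge a ha.le
  have hS2 := aux_sinh_ge b hb.le
  have hea := Real.exp_pos (a / 2)
  have heb := Real.exp_pos (b / 2)
  clear_value t a b
  rw [EA, EB, ES]
  constructor
  · rw [div_pow, div_mul_div_comm, div_le_div_iff₀ (by positivity) (by nlinarith)]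
    have key : 4 * ((Real.exp a - 1) * (Real.exp b - 1)) ≤
        (a * b) * ((Real.exp a + 1) * (Real.exp b + 1)) := by
      nlinarith [mul_le_mul hT1 hT2 (by nlinarith) (by nlinarith)]
    have hab : a * b = p * (1 - p) * t ^ 2 := by rw [hadef, hbdef]; ring
    rw [hab] at key
    linarith [mul_le_mul_of_nonneg_right key (sq_nonneg (x - 1))]
  · rw [div_pow, div_div, div_le_div_iff₀ (mul_pos (by linarith) (by linarith))
      (by positivity)]
    have key : (a * b) * (Real.exp (a / 2) * Real.exp (b / 2)) ≤
        (Real.exp a - 1) * (Real.exp b - 1) := by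
      nlinarith [mul_le_mul hS1 hS2 (mul_pos hb heb).le (by linarith)]
    have hab : a * b = p * (1 - p) * t ^ 2 := by rw [hadef, hbdef]; ring
    rw [hab] at key
    linarith [mul_le_mul_of_nonneg_right key (sq_nonneg (x - 1))]
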